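/- With the convention (p choose q) = 0 unless 0 ≤ q ≤ p, the signed sum a(n,k,t) := ∑_{i=0}^{t} (−1)^i (t choose i)(n−2i choose k−2i) equals 0 whenever k + t > n and 2t ≤ n. -/
import Mathlib

open Polynomial Finset

/-- Binomial coefficient with integer arguments, with the convention that
`zchoose p q = 0` unless `0 ≤ q ≤ p`. -/
def zchoose (p q : ℤ) : ℤ :=
  if 0 ≤ q ∧ q ≤ p then (p.toNat.choose q.toNat : ℤ) else 0

lemma zchoose_eq_coeff (n k i : ℕ) (h : 2 * i ≤ n) :
    zchoose ((n : ℤ) - 2 * i) ((k : ℤ) - 2 * i)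
      = ((X ^ (2 * i) * (1 + X : Polynomial ℤ) ^ (n - 2 * i)).coeff k) := by
  rw [Polynomial.coeff_X_pow_mul']
  rcases le_or_gt (2 * i) k with hk | hk
  · rw [if_pos hk, coeff_one_add_X_pow]
    unfold zchoose
    rcases le_or_gt (k : ℤ) (n : ℤ) with hkn | hkn
    · rw [if_pos ⟨by omega, by omega⟩]
      have h1 : ((n : ℤ) - 2 * i).toNat = n - 2 * i := by omega
      have h2 : ((k : ℤ) - 2 * i).toNat = k - 2 * i := by omega
      rw [h1, h2]
    · rw [if_neg (by omega)]
      rw [Nat.choose_eq_zero_of_lt (by omega), Nat.cast_zero]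
  · unfold zchoose
    rw [if_neg (by omega), if_neg (by omega)]

lemma key_poly (n t : ℕ) (h2t : 2 * t ≤ n) :
    (∑ i ∈ Finset.range (t + 1),
        Polynomial.C ((-1 : ℤ) ^ i * (t.choose i : ℤ)) *
          (X ^ (2 * i) * (1 + X : Polynomial ℤ) ^ (n - 2 * i)))
      = (1 + X) ^ (n - 2 * t) * (1 + 2 * X) ^ t := by
  have e : ((1 + X : Polynomial ℤ)) ^ 2 - X ^ 2 = 1 + 2 * X := by ring
  rw [← e, sub_pow, Finset.mul_sum]
  rw [← Finset.sum_range_reflect]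
  refine Finset.sum_congr rfl ?_
  intro i hi
  rw [Finset.mem_range] at hi
  have h1 : t + 1 - 1 - i = t - i := by omega
  rw [h1]
  have h3 : ((1 + X : Polynomial ℤ) ^ 2) ^ i = (1 + X) ^ (2 * i) := by
    rw [← pow_mul, Nat.mul_comm]
  have h4 : ((X : Polynomial ℤ) ^ 2) ^ (t - i) = X ^ (2 * (t - i)) := by
    rw [← pow_mul, Nat.mul_comm]
  rw [h3, h4]
  have h5 : (1 + X : Polynomial ℤ) ^ (n - 2 * t) * (1 + X) ^ (2 * i) =
      (1 + X) ^ (n - 2 * (t - i)) := by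
    rw [← pow_add]; congr 1; omega
  have h6 : ((-1 : Polynomial ℤ)) ^ (i + t) = (-1) ^ (t - i) := by
    rw [neg_one_pow_eq_pow_mod_two, neg_one_pow_eq_pow_mod_two (n := t - i)]
    congr 1; omega
  rw [Nat.choose_symm (by omega : i ≤ t), h6, ← h5]
  simp only [map_mul, map_pow, map_neg, map_one, map_natCast]
  ring

theorem avoid_pairs_sum_vanishes (n k t : ℕ) (h : n < k + t) (h2t : 2 * t ≤ n) :
    (∑ i ∈ Finset.range (t + 1),
        (-1 : ℤ) ^ i * (t.choose i : ℤ) *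
          zchoose ((n : ℤ) - 2 * i) ((k : ℤ) - 2 * i)) = 0 := by
  have hsum : (∑ i ∈ Finset.range (t + 1),
        (-1 : ℤ) ^ i * (t.choose i : ℤ) *
          zchoose ((n : ℤ) - 2 * i) ((k : ℤ) - 2 * i))
      = ((1 + X : Polynomial ℤ) ^ (n - 2 * t) * (1 + 2 * X) ^ t).coeff k := by
    rw [← key_poly n t h2t, Polynomial.finset_sum_coeff]
    refine Finset.sum_congr rfl ?_
    intro i hi
    rw [Finset.mem_range] at hi
    rw [zchoose_eq_coeff n k i (by omega), Polynomial.coeff_C_mul]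
  rw [hsum]
  apply Polynomial.coeff_eq_zero_of_natDegree_lt
  calc ((1 + X : Polynomial ℤ) ^ (n - 2 * t) * (1 + 2 * X) ^ t).natDegree
      ≤ (n - 2 * t) + t := by
        refine le_trans (Polynomial.natDegree_mul_le) (add_le_add ?_ ?_)
        · refine le_trans (Polynomial.natDegree_pow_le) ?_
          have : (1 + X : Polynomial ℤ).natDegree ≤ 1 := by compute_degree
          nlinarith [this]
        · refine le_trans (Polynomial.natDegree_pow_le) ?_
          have : (1 + 2 * X : Polynomial ℤ).natDegree ≤ 1 := by compute_degree
          nlinarith [this]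
    _ < k := by omega
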